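/- The σ-distance σ(q,p) on ℍ, defined as |q - p| if p and q lie on a common slice ℂ_I, and as sqrt((Re(q-p))² + |Im q|² + |Im p|²) otherwise, is a metric on ℍ, and every open set in the topology τ_σ induced by σ is slice-open (τ_σ ⊆ τ_s). -/

import Mathlib

open scoped Quaternion

/-- The slice `ℂ_I = ℝ + ℝI` inside the quaternions. -/
def qslice (I : ℍ[ℝ]) : Set ℍ[ℝ] := {q | ∃ x y : ℝ, q = (x : ℍ[ℝ]) + y • I}

/-- A set is slice-open if its trace on every slice `ℂ_I` is open. -/
def SliceOpen (Ω : Set ℍ[ℝ]) : Prop :=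
  ∀ I : ℍ[ℝ], I ^ 2 = -1 → IsOpen (Subtype.val ⁻¹' Ω : Set (qslice I))

open Classical in
/-- The σ-distance on `ℍ`. -/
noncomputable def sigmaDist (q p : ℍ[ℝ]) : ℝ :=
  if ∃ I : ℍ[ℝ], I ^ 2 = -1 ∧ q ∈ qslice I ∧ p ∈ qslice I then ‖q - p‖
  else Real.sqrt ((q - p).re ^ 2 + ‖q.im‖ ^ 2 + ‖p.im‖ ^ 2)

namespace SigmaAux

open Quaternion

/-- Linear dependence of two quaternions (used for imaginary parts). -/
def dep (u v : ℍ[ℝ]) : Prop := u = 0 ∨ ∃ t : ℝ, v = t • u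

lemma dep_refl (u : ℍ[ℝ]) : dep u u := Or.inr ⟨1, (one_smul ℝ u).symm⟩

lemma dep_symm {u v : ℍ[ℝ]} (h : dep u v) : dep v u := by
  rcases h with h | ⟨t, rfl⟩
  · exact Or.inr ⟨0, by simp [h]⟩
  · rcases eq_or_ne t 0 with rfl | ht
    · exact Or.inl (by simp)
    · exact Or.inr ⟨t⁻¹, by rw [smul_smul, inv_mul_cancel₀ ht, one_smul]⟩

lemma dep_trans {u v w : ℍ[ℝ]} (hu : u ≠ 0) (h1 : dep u v) (h2 : dep u w) : dep v w := by
  rcases h1 with h1 | ⟨s, rfl⟩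
  · exact absurd h1 hu
  rcases h2 with h2 | ⟨t, rfl⟩
  · exact absurd h2 hu
  rcases eq_or_ne s 0 with rfl | hs
  · exact Or.inl (by simp)
  · exact Or.inr ⟨t / s, by rw [smul_smul, div_mul_cancel₀ _ hs]⟩

lemma norm_eq_one_of_normSq {I : ℍ[ℝ]} (hn : normSq I = 1) : ‖I‖ = 1 := by
  have h := Quaternion.normSq_eq_norm_mul_self I
  nlinarith [norm_nonneg I]

lemma norm_im_sq (q : ℍ[ℝ]) : ‖q.im‖ ^ 2 = q.imI ^ 2 + q.imJ ^ 2 + q.imK ^ 2 := by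
  have h := Quaternion.normSq_eq_norm_mul_self q.im
  rw [Quaternion.normSq_def'] at h
  simp only [Quaternion.re_im, Quaternion.imI_im, Quaternion.imJ_im, Quaternion.imK_im] at h
  nlinarith [norm_nonneg q.im]

lemma norm_eq_sqrt (q : ℍ[ℝ]) : ‖q‖ = Real.sqrt (q.re ^ 2 + ‖q.im‖ ^ 2) := by
  have h : q.re ^ 2 + ‖q.im‖ ^ 2 = ‖q‖ ^ 2 := by
    have h1 := Quaternion.normSq_eq_norm_mul_self q
    rw [Quaternion.normSq_def'] at h1
    rw [norm_im_sq]; nlinarith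
  rw [h, Real.sqrt_sq (norm_nonneg q)]

lemma pure_unit_sq {I : ℍ[ℝ]} (h1 : I.re = 0) (h2 : ‖I‖ = 1) : I ^ 2 = -1 := by
  have hn : normSq I = 1 := by rw [Quaternion.normSq_eq_norm_mul_self, h2]; ring
  rw [Quaternion.normSq_def', h1] at hn
  rw [pow_two]
  ext
  · simp only [Quaternion.re_mul, Quaternion.re_neg, Quaternion.re_one, h1]
    linear_combination -hn
  · simp only [Quaternion.imI_mul, Quaternion.imI_neg, Quaternion.imI_one, h1]; ring
  · simp only [Quaternion.imJ_mul, Quaternion.imJ_neg, Quaternion.imJ_one, h1]; ring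
  · simp only [Quaternion.imK_mul, Quaternion.imK_neg, Quaternion.imK_one, h1]; ring

lemma sq_neg_one_re {I : ℍ[ℝ]} (h : I ^ 2 = -1) : I.re = 0 ∧ ‖I‖ = 1 := by
  rw [pow_two] at h
  have hre := congrArg QuaternionAlgebra.re h
  have hi := congrArg QuaternionAlgebra.imI h
  have hj := congrArg QuaternionAlgebra.imJ h
  have hk := congrArg QuaternionAlgebra.imK h
  simp [Quaternion.re_mul, Quaternion.imI_mul, Quaternion.imJ_mul, Quaternion.imK_mul] at hre hi hj hk
  have hi' : I.re * I.imI = 0 := by linear_combination hi / 2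
  have hj' : I.re * I.imJ = 0 := by linear_combination hj / 2
  have hk' : I.re * I.imK = 0 := by linear_combination hk / 2
  have hr : I.re = 0 := by
    by_contra hr
    have hI : I.imI = 0 := (mul_eq_zero.1 hi').resolve_left hr
    have hJ : I.imJ = 0 := (mul_eq_zero.1 hj').resolve_left hr
    have hK : I.imK = 0 := (mul_eq_zero.1 hk').resolve_left hr
    rw [hI, hJ, hK] at hre
    nlinarith [sq_nonneg I.re]
  refine ⟨hr, norm_eq_one_of_normSq ?_⟩
  rw [hr] at hre
  rw [Quaternion.normSq_def', hr]
  linear_combination -hre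

lemma im_eq_self {I : ℍ[ℝ]} (h1 : I.re = 0) : I.im = I := by
  conv_rhs => rw [← Quaternion.re_add_im I]
  rw [h1]; simp

lemma mem_qslice_iff {I : ℍ[ℝ]} (h1 : I.re = 0) (q : ℍ[ℝ]) :
    q ∈ qslice I ↔ ∃ y : ℝ, q.im = y • I := by
  constructor
  · rintro ⟨x, y, rfl⟩
    refine ⟨y, ?_⟩
    rw [Quaternion.im_add, Quaternion.im_coe, Quaternion.im_smul, im_eq_self h1, zero_add]
  · rintro ⟨y, hy⟩
    refine ⟨q.re, y, ?_⟩
    conv_lhs => rw [← Quaternion.re_add_im q]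
    rw [hy]

lemma exists_slice (q : ℍ[ℝ]) : ∃ I : ℍ[ℝ], I ^ 2 = -1 ∧ q ∈ qslice I := by
  rcases eq_or_ne q.im 0 with h | h
  · refine ⟨⟨0, 1, 0, 0⟩, pure_unit_sq rfl (norm_eq_one_of_normSq ?_), ?_⟩
    · exact (Quaternion.normSq_def' _).trans (by norm_num)
    · exact (mem_qslice_iff rfl q).2 ⟨0, by rw [h]; exact (zero_smul ℝ _).symm⟩
  · set I : ℍ[ℝ] := ‖q.im‖⁻¹ • q.im with hI
    have hre : I.re = 0 := by simp [hI, Quaternion.re_im]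
    have hnI : ‖I‖ = 1 := by
      rw [hI, norm_smul, norm_inv, norm_norm, inv_mul_cancel₀ (norm_ne_zero_iff.2 h)]
    refine ⟨I, pure_unit_sq hre hnI, (mem_qslice_iff hre q).2 ⟨‖q.im‖, ?_⟩⟩
    rw [hI, smul_smul, mul_inv_cancel₀ (norm_ne_zero_iff.2 h), one_smul]

lemma common_iff (q p : ℍ[ℝ]) :
    (∃ I : ℍ[ℝ], I ^ 2 = -1 ∧ q ∈ qslice I ∧ p ∈ qslice I) ↔ dep q.im p.im := by
  constructor
  · rintro ⟨I, hI, hq, hp⟩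
    obtain ⟨hre, -⟩ := sq_neg_one_re hI
    obtain ⟨y, hy⟩ := (mem_qslice_iff hre q).1 hq
    obtain ⟨z, hz⟩ := (mem_qslice_iff hre p).1 hp
    rcases eq_or_ne y 0 with rfl | hy0
    · exact Or.inl (by simp [hy])
    · exact Or.inr ⟨z / y, by rw [hy, hz, smul_smul, div_mul_cancel₀ _ hy0]⟩
  · intro h
    rcases h with h | ⟨t, ht⟩
    · obtain ⟨I, hI, hp⟩ := exists_slice p
      obtain ⟨hre, -⟩ := sq_neg_one_re hI
      exact ⟨I, hI, (mem_qslice_iff hre q).2 ⟨0, by simp [h]⟩, hp⟩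
    · rcases eq_or_ne q.im 0 with h0 | h0
      · obtain ⟨I, hI, hp⟩ := exists_slice p
        obtain ⟨hre, -⟩ := sq_neg_one_re hI
        exact ⟨I, hI, (mem_qslice_iff hre q).2 ⟨0, by simp [h0]⟩, hp⟩
      · set I : ℍ[ℝ] := ‖q.im‖⁻¹ • q.im with hI
        have hre : I.re = 0 := by simp [hI, Quaternion.re_im]
        have hnI : ‖I‖ = 1 := by
          rw [hI, norm_smul, norm_inv, norm_norm, inv_mul_cancel₀ (norm_ne_zero_iff.2 h0)]
        have hqim : q.im = ‖q.im‖ • I := by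
          rw [hI, smul_smul, mul_inv_cancel₀ (norm_ne_zero_iff.2 h0), one_smul]
        refine ⟨I, pure_unit_sq hre hnI, (mem_qslice_iff hre q).2 ⟨‖q.im‖, hqim⟩,
          (mem_qslice_iff hre p).2 ⟨t * ‖q.im‖, ?_⟩⟩
        rw [mul_smul, ← hqim]
        exact ht

lemma sig_dep {q p : ℍ[ℝ]} (h : dep q.im p.im) :
    sigmaDist q p = Real.sqrt ((q - p).re ^ 2 + ‖q.im - p.im‖ ^ 2) := by
  rw [sigmaDist, if_pos ((common_iff q p).2 h), norm_eq_sqrt, Quaternion.im_sub]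

lemma sig_ndep {q p : ℍ[ℝ]} (h : ¬ dep q.im p.im) :
    sigmaDist q p = Real.sqrt ((q - p).re ^ 2 + (‖q.im‖ ^ 2 + ‖p.im‖ ^ 2)) := by
  rw [sigmaDist, if_neg (fun hc => h ((common_iff q p).1 hc))]
  ring_nf

lemma mink3 (a1 a2 a3 b1 b2 b3 : ℝ) :
    Real.sqrt ((a1 + b1) ^ 2 + ((a2 + b2) ^ 2 + (a3 + b3) ^ 2)) ≤
      Real.sqrt (a1 ^ 2 + (a2 ^ 2 + a3 ^ 2)) + Real.sqrt (b1 ^ 2 + (b2 ^ 2 + b3 ^ 2)) := by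
  set A := Real.sqrt (a1 ^ 2 + (a2 ^ 2 + a3 ^ 2)) with hA
  set B := Real.sqrt (b1 ^ 2 + (b2 ^ 2 + b3 ^ 2)) with hB
  have hA0 : 0 ≤ A := Real.sqrt_nonneg _
  have hB0 : 0 ≤ B := Real.sqrt_nonneg _
  have hA2 : A ^ 2 = a1 ^ 2 + (a2 ^ 2 + a3 ^ 2) := Real.sq_sqrt (by positivity)
  have hB2 : B ^ 2 = b1 ^ 2 + (b2 ^ 2 + b3 ^ 2) := Real.sq_sqrt (by positivity)
  have hcs : a1 * b1 + a2 * b2 + a3 * b3 ≤ A * B := by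
    rcases le_or_gt (a1 * b1 + a2 * b2 + a3 * b3) 0 with h | h
    · exact h.trans (by positivity)
    · have h2 : (a1 * b1 + a2 * b2 + a3 * b3) ^ 2 ≤ (A * B) ^ 2 := by
        rw [mul_pow, hA2, hB2]
        nlinarith [sq_nonneg (a1 * b2 - a2 * b1), sq_nonneg (a1 * b3 - a3 * b1),
          sq_nonneg (a2 * b3 - a3 * b2)]
      nlinarith [mul_nonneg hA0 hB0]
  have key : (a1 + b1) ^ 2 + ((a2 + b2) ^ 2 + (a3 + b3) ^ 2) ≤ (A + B) ^ 2 := by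
    nlinarith
  calc Real.sqrt ((a1 + b1) ^ 2 + ((a2 + b2) ^ 2 + (a3 + b3) ^ 2))
      ≤ Real.sqrt ((A + B) ^ 2) := Real.sqrt_le_sqrt key
    _ = A + B := Real.sqrt_sq (by linarith)

lemma tri_aux (x1 x2 E E1 E2 s1 t1 s2 t2 : ℝ)
    (h1 : E1 = s1 ^ 2 + t1 ^ 2) (h2 : E2 = s2 ^ 2 + t2 ^ 2)
    (hE : E ≤ (s1 + s2) ^ 2 + (t1 + t2) ^ 2) :
    Real.sqrt ((x1 + x2) ^ 2 + E) ≤ Real.sqrt (x1 ^ 2 + E1) + Real.sqrt (x2 ^ 2 + E2) := by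
  rw [h1, h2]
  calc Real.sqrt ((x1 + x2) ^ 2 + E)
      ≤ Real.sqrt ((x1 + x2) ^ 2 + ((s1 + s2) ^ 2 + (t1 + t2) ^ 2)) :=
        Real.sqrt_le_sqrt (by linarith)
    _ ≤ _ := mink3 x1 s1 t1 x2 s2 t2

lemma norm_sub_le3 (u v w : ℍ[ℝ]) : ‖u - w‖ ≤ ‖u - v‖ + ‖v - w‖ := by
  have := norm_add_le (u - v) (v - w); simpa using this

end SigmaAux

open SigmaAux Quaternion

/-- The σ-distance is a metric on `ℍ`, and every σ-open set is slice-open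
(`τ_σ ⊆ τ_s`). -/
theorem sigmaDist_metric_and_sigma_open_sliceOpen :
    (∀ q : ℍ[ℝ], sigmaDist q q = 0) ∧
    (∀ q p : ℍ[ℝ], sigmaDist q p = 0 → q = p) ∧
    (∀ q p : ℍ[ℝ], sigmaDist q p = sigmaDist p q) ∧
    (∀ q p r : ℍ[ℝ], sigmaDist q r ≤ sigmaDist q p + sigmaDist p r) ∧
    (∀ Ω : Set ℍ[ℝ],
      (∀ q ∈ Ω, ∃ ε > (0 : ℝ), ∀ p : ℍ[ℝ], sigmaDist q p < ε → p ∈ Ω) →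
      SliceOpen Ω) := by
  refine ⟨?_, ?_, ?_, ?_, ?_⟩
  · -- reflexivity
    intro q
    rw [sigmaDist, if_pos ((common_iff q q).2 (dep_refl _))]
    simp
  · -- separation
    intro q p h0
    by_cases h : ∃ I : ℍ[ℝ], I ^ 2 = -1 ∧ q ∈ qslice I ∧ p ∈ qslice I
    · rw [sigmaDist, if_pos h] at h0
      exact sub_eq_zero.1 (norm_eq_zero.1 h0)
    · exfalso
      rw [sigmaDist, if_neg h] at h0
      have hsum : (q - p).re ^ 2 + ‖q.im‖ ^ 2 + ‖p.im‖ ^ 2 = 0 := by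
        have := Real.sqrt_eq_zero (by positivity) |>.1 h0
        exact this
      have hq : q.im = 0 := by
        have : ‖q.im‖ ^ 2 = 0 := by
          nlinarith [sq_nonneg (q - p).re, sq_nonneg ‖p.im‖, sq_nonneg ‖q.im‖]
        simpa using pow_eq_zero_iff (n := 2) (by norm_num) |>.1 this
      exact h ((common_iff q p).2 (Or.inl hq))
  · -- symmetry
    intro q p
    rw [sigmaDist, sigmaDist]
    by_cases h : ∃ I : ℍ[ℝ], I ^ 2 = -1 ∧ q ∈ qslice I ∧ p ∈ qslice I
    · obtain ⟨I, h1, h2, h3⟩ := h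
      rw [if_pos ⟨I, h1, h2, h3⟩, if_pos ⟨I, h1, h3, h2⟩, norm_sub_rev]
    · have h' : ¬ ∃ I : ℍ[ℝ], I ^ 2 = -1 ∧ p ∈ qslice I ∧ q ∈ qslice I := by
        rintro ⟨I, h1, h2, h3⟩; exact h ⟨I, h1, h3, h2⟩
      rw [if_neg h, if_neg h']
      congr 1
      simp only [Quaternion.re_sub]
      ring
  · -- triangle inequality
    intro q p r
    have hx : (q - r).re = (q - p).re + (p - r).re := by
      simp only [Quaternion.re_sub]; ring
    have hqp := norm_nonneg (q.im - p.im)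
    have hpr := norm_nonneg (p.im - r.im)
    have hqr := norm_nonneg (q.im - r.im)
    have hu := norm_nonneg q.im
    have hv := norm_nonneg p.im
    have hw := norm_nonneg r.im
    by_cases h12 : dep q.im p.im <;> by_cases h23 : dep p.im r.im
    · -- both slices
      rw [sig_dep h12, sig_dep h23]
      by_cases h13 : dep q.im r.im
      · rw [sig_dep h13, hx]
        refine tri_aux _ _ _ _ _ ‖q.im - p.im‖ 0 ‖p.im - r.im‖ 0 (by ring) (by ring) ?_
        have := norm_sub_le3 q.im p.im r.im
        nlinarith
      · have hv0 : p.im = 0 := by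
          by_contra hv0
          exact h13 (dep_trans hv0 (dep_symm h12) h23)
        rw [sig_ndep h13, hx]
        refine tri_aux _ _ _ _ _ ‖q.im - p.im‖ 0 ‖p.im - r.im‖ 0 (by ring) (by ring) ?_
        rw [hv0] at *
        simp only [sub_zero, zero_sub, norm_neg] at *
        nlinarith
    · -- q,p slice; p,r not
      rw [sig_dep h12, sig_ndep h23]
      by_cases h13 : dep q.im r.im
      · have hu0 : q.im = 0 := by
          by_contra hu0
          exact h23 (dep_trans hu0 h12 h13)
        rw [sig_dep h13, hx]
        refine tri_aux _ _ _ _ _ ‖q.im - p.im‖ 0 ‖p.im‖ ‖r.im‖ (by ring) (by ring) ?_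
        rw [hu0] at *
        simp only [zero_sub, norm_neg] at *
        nlinarith
      · rw [sig_ndep h13, hx]
        refine tri_aux _ _ _ _ _ ‖q.im - p.im‖ 0 ‖p.im‖ ‖r.im‖ (by ring) (by ring) ?_
        have h1 : ‖q.im‖ ≤ ‖q.im - p.im‖ + ‖p.im‖ := by
          have := norm_add_le (q.im - p.im) p.im; simpa using this
        nlinarith
    · -- p,r slice; q,p not
      rw [sig_ndep h12, sig_dep h23]
      by_cases h13 : dep q.im r.im
      · have hw0 : r.im = 0 := by
          by_contra hw0
          exact h12 (dep_symm (dep_trans hw0 (dep_symm h23) (dep_symm h13)))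
        rw [sig_dep h13, hx]
        refine tri_aux _ _ _ _ _ ‖q.im‖ ‖p.im‖ 0 ‖p.im - r.im‖ (by ring) (by ring) ?_
        rw [hw0] at *
        simp only [sub_zero] at *
        nlinarith
      · rw [sig_ndep h13, hx]
        refine tri_aux _ _ _ _ _ ‖q.im‖ ‖p.im‖ 0 ‖p.im - r.im‖ (by ring) (by ring) ?_
        have h1 : ‖r.im‖ ≤ ‖p.im - r.im‖ + ‖p.im‖ := by
          have := norm_add_le (r.im - p.im) p.im
          rw [norm_sub_rev] at this
          simpa using this
        nlinarith
    · -- neither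
      rw [sig_ndep h12, sig_ndep h23]
      by_cases h13 : dep q.im r.im
      · rw [sig_dep h13, hx]
        refine tri_aux _ _ _ _ _ ‖q.im‖ ‖p.im‖ ‖r.im‖ ‖p.im‖ (by ring) (by ring) ?_
        have h1 : ‖q.im - r.im‖ ≤ ‖q.im‖ + ‖r.im‖ := norm_sub_le _ _
        nlinarith
      · rw [sig_ndep h13, hx]
        refine tri_aux _ _ _ _ _ ‖q.im‖ ‖p.im‖ ‖r.im‖ ‖p.im‖ (by ring) (by ring) ?_
        nlinarith
  · -- σ-open implies slice-open
    intro Ω hΩ I hI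
    rw [Metric.isOpen_iff]
    rintro ⟨x, hxI⟩ hx
    obtain ⟨ε, hε, hball⟩ := hΩ x hx
    refine ⟨ε, hε, ?_⟩
    rintro ⟨y, hyI⟩ hy
    rw [Metric.mem_ball, Subtype.dist_eq, dist_eq_norm] at hy
    have hσ : sigmaDist x y = ‖x - y‖ := by
      rw [sigmaDist, if_pos ⟨I, hI, hxI, hyI⟩]
    have : sigmaDist x y < ε := by rw [hσ, norm_sub_rev]; exact hy
    exact hball y this
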